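/- If at least one of the endomorphisms B_1, …, B_n is bijective, then the Koszul-type complex (C^•, ∇) is exact: for every integer p, the kernel of ∇ : C^p → C^{p+1} equals the image of ∇ : C^{p−1} → C^p. In particular ∇ : C^0 → C^1 is injective, and for each p-element subset family σ ∈ C^p with ∇σ = 0 and p ≥ 1 there exists τ ∈ C^{p−1} with ∇τ = σ. -/
import Mathlib


/-! Koszul-type complex from pairwise commuting endomorphisms.

`KoszulC R M n p` is the module of functions assigning to each `p`-element
subset `I` of `{1, …, n}` (modeled as `Fin n`) an element of `M`.  For `p > n`
this module is automatically zero (there are no such subsets), and terms in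
negative degree (which are zero) are omitted by indexing over `ℕ`. -/

/-- The `p`-th term of the Koszul-type complex: functions from `p`-element
subsets of `{1, …, n}` to `M`. -/
abbrev KoszulC (R M : Type*) [CommRing R] [AddCommGroup M] [Module R M] (n p : ℕ) :=
  {I : Finset (Fin n) // I.card = p} → M

/-- `pos k J`: the position of `k` in `J`, i.e. the number of `j ∈ J` with `j < k`. -/
def KoszulPos {n : ℕ} (k : Fin n) (J : Finset (Fin n)) : ℕ :=
  (J.filter (fun j => j < k)).card

/-- The differential `∇ : C^p → C^{p+1}`,
`(∇σ)_J = Σ_{k ∈ J} (−1)^{pos(k,J)} B_k (σ_{J ∖ {k}})`. -/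
def koszulNabla {R M : Type*} [CommRing R] [AddCommGroup M] [Module R M] {n : ℕ}
    (B : Fin n → Module.End R M) (p : ℕ) :
    KoszulC R M n p →ₗ[R] KoszulC R M n (p + 1) where
  toFun σ J := ∑ k ∈ J.1.attach,
    ((-1 : ℤ) ^ KoszulPos k.1 J.1) •
      B k.1 (σ ⟨J.1.erase k.1, by
        simp [Finset.card_erase_of_mem k.2, J.2]⟩)
  map_add' σ τ := by
    funext J
    simp [Finset.sum_add_distrib, smul_add]
  map_smul' r σ := by
    funext J
    simp only [map_smul, Pi.smul_apply, Finset.smul_sum, RingHom.id_apply]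
    exact Finset.sum_congr rfl fun k _ => (smul_comm _ _ _)

section aux
variable {R M : Type*} [CommRing R] [AddCommGroup M] [Module R M] {n : ℕ}

/-- Extension of a cochain to all finsets, by zero. -/
def KoszulExt {p : ℕ} (σ : KoszulC R M n p) : Finset (Fin n) → M :=
  fun I => if h : I.card = p then σ ⟨I, h⟩ else 0

lemma koszulExt_eq {p : ℕ} (σ : KoszulC R M n p) (I : Finset (Fin n)) (h : I.card = p) :
    KoszulExt σ I = σ ⟨I, h⟩ := dif_pos h

lemma koszulExt_ne {p : ℕ} (σ : KoszulC R M n p) (I : Finset (Fin n)) (h : I.card ≠ p) :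
    KoszulExt σ I = 0 := dif_neg h

lemma koszulPos_erase {J : Finset (Fin n)} {i j : Fin n} (hj : j ∈ J) (_hij : i ≠ j) :
    KoszulPos i J = KoszulPos i (J.erase j) + (if j < i then 1 else 0) := by
  unfold KoszulPos
  rw [Finset.filter_erase]
  by_cases h : j < i
  · have hmem : j ∈ J.filter (fun x => x < i) := Finset.mem_filter.mpr ⟨hj, h⟩
    rw [if_pos h, Finset.card_erase_of_mem hmem]
    have : 0 < (J.filter (fun x => x < i)).card := Finset.card_pos.mpr ⟨j, hmem⟩
    omega
  · have he : (Finset.filter (fun x => x < i) J).erase j = Finset.filter (fun x => x < i) J :=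
      Finset.erase_eq_of_notMem (fun hmem => h (Finset.mem_filter.mp hmem).2)
    rw [if_neg h, he, add_zero]

lemma koszul_sign {J : Finset (Fin n)} {j k : Fin n} (hjJ : j ∈ J) (hkJ : k ∈ J) (hjk : j ≠ k) :
    ((-1:ℤ) ^ (KoszulPos j (J.erase k) + KoszulPos k (J.erase j)))
      = -((-1:ℤ) ^ (KoszulPos j J + KoszulPos k J)) := by
  rw [koszulPos_erase (i := j) hkJ hjk, koszulPos_erase (i := k) hjJ (Ne.symm hjk)]
  rcases hjk.lt_or_gt with h | h
  · rw [if_neg (asymm h), if_pos h]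
    rw [show KoszulPos j (J.erase k) + 0 + (KoszulPos k (J.erase j) + 1)
        = (KoszulPos j (J.erase k) + KoszulPos k (J.erase j)) + 1 by omega]
    rw [pow_succ, mul_neg_one, neg_neg]
  · rw [if_pos h, if_neg (asymm h)]
    rw [show KoszulPos j (J.erase k) + 1 + (KoszulPos k (J.erase j) + 0)
        = (KoszulPos j (J.erase k) + KoszulPos k (J.erase j)) + 1 by omega]
    rw [pow_succ, mul_neg_one, neg_neg]

lemma koszul_sign' {J : Finset (Fin n)} {i j : Fin n} (hi : i ∈ J) (hj : j ∈ J) (hij : i ≠ j) :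
    ((-1:ℤ) ^ (KoszulPos j J + KoszulPos i (J.erase j)))
      = -((-1:ℤ) ^ (KoszulPos i J + KoszulPos j (J.erase i))) := by
  rw [koszulPos_erase (i := j) hi (Ne.symm hij), koszulPos_erase (i := i) hj hij]
  rcases hij.lt_or_gt with h | h
  · rw [if_pos h, if_neg (asymm h)]
    rw [show KoszulPos j (J.erase i) + 1 + KoszulPos i (J.erase j)
        = (KoszulPos i (J.erase j) + 0 + KoszulPos j (J.erase i)) + 1 by omega]
    rw [pow_succ, mul_neg_one]
  · rw [if_neg (asymm h), if_pos h]
    rw [show KoszulPos i (J.erase j) + 1 + KoszulPos j (J.erase i)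
        = (KoszulPos j (J.erase i) + 0 + KoszulPos i (J.erase j)) + 1 by omega]
    rw [pow_succ, mul_neg_one, neg_neg]

lemma koszulNabla_apply (B : Fin n → Module.End R M) {p : ℕ} (σ : KoszulC R M n p)
    (J : Finset (Fin n)) (hJ : J.card = p + 1) :
    koszulNabla B p σ ⟨J, hJ⟩
      = ∑ k ∈ J, ((-1:ℤ) ^ KoszulPos k J) • B k (KoszulExt σ (J.erase k)) := by
  simp only [koszulNabla, LinearMap.coe_mk, AddHom.coe_mk]
  rw [← Finset.sum_attach J (fun k => ((-1:ℤ) ^ KoszulPos k J) • B k (KoszulExt σ (J.erase k)))]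
  refine Finset.sum_congr rfl fun k _ => ?_
  congr 1
  congr 1
  rw [koszulExt_eq σ _ (by rw [Finset.card_erase_of_mem k.2, hJ]; rfl)]


lemma koszulNabla_sq (B : Fin n → Module.End R M) (hB : ∀ i j, Commute (B i) (B j)) (p : ℕ)
    (σ : KoszulC R M n p) : koszulNabla B (p + 1) (koszulNabla B p σ) = 0 := by
  funext J
  obtain ⟨J, hJ⟩ := J
  rw [Pi.zero_apply, koszulNabla_apply]
  have hstep : ∀ j ∈ J, ((-1:ℤ) ^ KoszulPos j J) • B j (KoszulExt (koszulNabla B p σ) (J.erase j))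
      = ∑ i ∈ J, ((-1:ℤ) ^ (KoszulPos j J + KoszulPos i (J.erase j))) •
          B j (B i (KoszulExt σ ((J.erase j).erase i))) := by
    intro j hj
    have hc : (J.erase j).card = p + 1 := by rw [Finset.card_erase_of_mem hj, hJ]; omega
    rw [koszulExt_eq _ _ hc, koszulNabla_apply B σ _ hc, map_sum, Finset.smul_sum]
    have h1 : ∀ i ∈ J.erase j, ((-1:ℤ) ^ KoszulPos j J) •
        B j (((-1:ℤ) ^ KoszulPos i (J.erase j)) • B i (KoszulExt σ ((J.erase j).erase i)))
        = ((-1:ℤ) ^ (KoszulPos j J + KoszulPos i (J.erase j))) •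
          B j (B i (KoszulExt σ ((J.erase j).erase i))) := by
      intro i _
      rw [map_zsmul, smul_smul, ← pow_add]
    rw [Finset.sum_congr rfl h1]
    refine Finset.sum_subset (Finset.erase_subset _ _) fun i hiJ hni => ?_
    have hij : i = j := by
      by_contra hne
      exact hni (Finset.mem_erase.mpr ⟨hne, hiJ⟩)
    subst hij
    rw [Finset.erase_idem, koszulExt_ne σ _ (by rw [Finset.card_erase_of_mem hiJ, hJ]; omega),
      map_zero, map_zero, smul_zero]
  rw [Finset.sum_congr rfl hstep, ← Finset.sum_product']
  have hdiag : ∀ a : Fin n × Fin n, a.1 = a.2 →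
      ((-1:ℤ) ^ (KoszulPos a.1 J + KoszulPos a.2 (J.erase a.1))) •
        B a.1 (B a.2 (KoszulExt σ ((J.erase a.1).erase a.2))) = 0 := by
    intro a ha
    rw [← ha, Finset.erase_idem]
    by_cases hm : a.1 ∈ J
    · rw [koszulExt_ne σ _ (by rw [Finset.card_erase_of_mem hm, hJ]; omega), map_zero,
        map_zero, smul_zero]
    · rw [Finset.erase_eq_of_notMem hm,
        koszulExt_ne σ _ (by rw [hJ]; omega), map_zero, map_zero, smul_zero]
  refine Finset.sum_involution (fun a _ => a.swap) ?_ ?_ (fun a ha => ?_) (fun a ha => rfl)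
  · intro a ha
    by_cases hd : a.1 = a.2
    · rw [hdiag a hd, hdiag a.swap hd.symm, add_zero]
    · have h1 : a.1 ∈ J := (Finset.mem_product.mp ha).1
      have h2 : a.2 ∈ J := (Finset.mem_product.mp ha).2
      have hBij : B a.2 (B a.1 (KoszulExt σ ((J.erase a.2).erase a.1)))
          = B a.1 (B a.2 (KoszulExt σ ((J.erase a.1).erase a.2))) := by
        rw [Finset.erase_right_comm]
        have := DFunLike.congr_fun (hB a.2 a.1).eq (KoszulExt σ ((J.erase a.1).erase a.2))
        simpa [Module.End.mul_apply] using this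
      show ((-1:ℤ) ^ (KoszulPos a.1 J + KoszulPos a.2 (J.erase a.1))) •
          B a.1 (B a.2 (KoszulExt σ ((J.erase a.1).erase a.2)))
        + ((-1:ℤ) ^ (KoszulPos a.2 J + KoszulPos a.1 (J.erase a.2))) •
          B a.2 (B a.1 (KoszulExt σ ((J.erase a.2).erase a.1))) = 0
      rw [hBij, koszul_sign' h2 h1 (Ne.symm hd), neg_smul, neg_add_cancel]
  · intro a ha hfa hsw
    refine hfa (hdiag a ?_)
    have := congrArg Prod.fst hsw
    simpa using this.symm
  · simpa [Finset.mem_product] using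
      ⟨(Finset.mem_product.mp ha).2, (Finset.mem_product.mp ha).1⟩

/-- The contracting homotopy built from an inverse `Binv` of `B k`. -/
def koszulHtpy {p : ℕ} (k : Fin n) (Binv : Module.End R M) (σ : KoszulC R M n (p + 1)) :
    KoszulC R M n p :=
  fun I => if k ∈ I.1 then 0 else
    ((-1:ℤ) ^ KoszulPos k (insert k I.1)) • Binv (KoszulExt σ (insert k I.1))

lemma koszulHtpy_apply {p : ℕ} (k : Fin n) (Binv : Module.End R M) (σ : KoszulC R M n (p + 1))
    (I : Finset (Fin n)) (hI : I.card = p) :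
    koszulHtpy k Binv σ ⟨I, hI⟩ = if k ∈ I then 0 else
      ((-1:ℤ) ^ KoszulPos k (insert k I)) • Binv (KoszulExt σ (insert k I)) := rfl

end aux

/-- If at least one of the commuting endomorphisms `B k` is bijective, the
Koszul-type complex `(C^•, ∇)` is exact: the kernel of `∇ : C^p → C^{p+1}`
equals the image of `∇ : C^{p−1} → C^p` for every degree `p`; in degree `0`
(where `C^{−1} = 0`) this says `∇ : C^0 → C^1` is injective. -/
theorem koszul_exact {R M : Type*} [CommRing R] [AddCommGroup M]
    [Module R M] {n : ℕ} (B : Fin n → Module.End R M)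
    (hB : ∀ i j, Commute (B i) (B j))
    (hbij : ∃ k, Function.Bijective (B k)) :
    Function.Injective (koszulNabla B 0) ∧
      ∀ p : ℕ, LinearMap.ker (koszulNabla B (p + 1))
        = LinearMap.range (koszulNabla B p) := by
  obtain ⟨k, hk⟩ := hbij
  have hUnit : IsUnit (B k) := (Module.End.isUnit_iff (B k)).mpr hk
  set u := hUnit.unit with hu
  have hBk : (↑u : Module.End R M) = B k := hUnit.unit_spec
  set Binv : Module.End R M := ↑u⁻¹ with hBinv
  have hinv2 : ∀ x : M, B k (Binv x) = x := by
    intro x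
    have h := DFunLike.congr_fun u.mul_inv x
    rw [Module.End.mul_apply, hBk] at h
    exact h
  have hcomm : ∀ (j : Fin n) (x : M), B j (Binv x) = Binv (B j x) := by
    intro j x
    have hc : Commute (B j) (↑u⁻¹ : Module.End R M) :=
      Commute.units_inv_right (hBk ▸ hB j k)
    have h := DFunLike.congr_fun hc.eq x
    rwa [Module.End.mul_apply, Module.End.mul_apply] at h
  constructor
  · intro σ τ h
    have h1 := congrFun h ⟨{k}, Finset.card_singleton k⟩
    rw [koszulNabla_apply B σ _ (Finset.card_singleton k),
      koszulNabla_apply B τ _ (Finset.card_singleton k)] at h1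
    simp only [Finset.sum_singleton, Finset.erase_singleton] at h1
    have hpos : KoszulPos k {k} = 0 := by
      simp [KoszulPos, Finset.filter_singleton]
    rw [hpos, pow_zero, one_smul, one_smul] at h1
    have h2 := hk.injective h1
    rw [koszulExt_eq σ ∅ rfl, koszulExt_eq τ ∅ rfl] at h2
    funext I
    obtain ⟨I, hI⟩ := I
    have hIe : I = ∅ := Finset.card_eq_zero.mp hI
    subst hIe
    exact h2
  · intro p
    ext σ
    simp only [LinearMap.mem_ker, LinearMap.mem_range]
    constructor
    · intro hσ
      refine ⟨koszulHtpy k Binv σ, ?_⟩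
      funext J
      obtain ⟨J, hJ⟩ := J
      rw [koszulNabla_apply]
      by_cases hkJ : k ∈ J
      · have hz : ∀ j ∈ J, j ≠ k →
            ((-1:ℤ) ^ KoszulPos j J) • B j (KoszulExt (koszulHtpy k Binv σ) (J.erase j)) = 0 := by
          intro j hj hjk
          have hc : (J.erase j).card = p := by rw [Finset.card_erase_of_mem hj, hJ]; omega
          rw [koszulExt_eq _ _ hc, koszulHtpy_apply,
            if_pos (Finset.mem_erase.mpr ⟨Ne.symm hjk, hkJ⟩), map_zero, smul_zero]
        rw [Finset.sum_eq_single_of_mem k hkJ hz]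
        have hc : (J.erase k).card = p := by rw [Finset.card_erase_of_mem hkJ, hJ]; omega
        rw [koszulExt_eq _ _ hc, koszulHtpy_apply, if_neg (Finset.notMem_erase k J),
          Finset.insert_erase hkJ, koszulExt_eq σ J hJ, map_zsmul, hinv2, smul_smul, ← pow_add,
          Even.neg_one_pow ⟨KoszulPos k J, rfl⟩, one_smul]
      · have hJ' : (insert k J).card = (p + 1) + 1 := by
          rw [Finset.card_insert_of_notMem hkJ, hJ]
        have h0 := congrFun hσ ⟨insert k J, hJ'⟩
        rw [Pi.zero_apply, koszulNabla_apply B σ _ hJ', Finset.sum_insert hkJ,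
          Finset.erase_insert hkJ] at h0
        have hS := eq_neg_of_add_eq_zero_right h0
        apply hk.injective
        rw [map_sum]
        have hterm : ∀ j ∈ J,
            B k (((-1:ℤ) ^ KoszulPos j J) • B j (KoszulExt (koszulHtpy k Binv σ) (J.erase j)))
            = (-((-1:ℤ) ^ (KoszulPos j (insert k J) + KoszulPos k (insert k J)))) •
                B j (KoszulExt σ ((insert k J).erase j)) := by
          intro j hj
          have hjk : j ≠ k := fun h => hkJ (h ▸ hj)
          have hc : (J.erase j).card = p := by rw [Finset.card_erase_of_mem hj, hJ]; omega
          have hne : k ∉ J.erase j := fun h => hkJ (Finset.mem_of_mem_erase h)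
          have hins : insert k (J.erase j) = (insert k J).erase j :=
            (Finset.erase_insert_of_ne (Ne.symm hjk)).symm
          rw [koszulExt_eq _ _ hc, koszulHtpy_apply, if_neg hne, hins,
            map_zsmul (B j), hcomm j, map_zsmul (B k), map_zsmul (B k), hinv2,
            smul_smul, ← pow_add]
          congr 1
          have hsign := koszul_sign (J := insert k J) (j := j) (k := k)
            (Finset.mem_insert_of_mem hj) (Finset.mem_insert_self k J) hjk
          rwa [Finset.erase_insert hkJ] at hsign
        rw [Finset.sum_congr rfl hterm]
        have hmid : ∀ j ∈ J,
            (-((-1:ℤ) ^ (KoszulPos j (insert k J) + KoszulPos k (insert k J)))) •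
              B j (KoszulExt σ ((insert k J).erase j))
            = ((-1:ℤ) ^ KoszulPos k (insert k J)) •
              (-(((-1:ℤ) ^ KoszulPos j (insert k J)) • B j (KoszulExt σ ((insert k J).erase j)))) := by
          intro j hj
          rw [smul_neg, smul_smul, ← neg_smul]
          congr 1
          rw [pow_add]
          ring
        rw [Finset.sum_congr rfl hmid, ← Finset.smul_sum, Finset.sum_neg_distrib, hS, neg_neg,
          smul_smul, ← pow_add, Even.neg_one_pow ⟨KoszulPos k (insert k J), rfl⟩, one_smul,
          koszulExt_eq σ J hJ]
    · rintro ⟨τ, rfl⟩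
      exact koszulNabla_sq B hB p τ
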